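/- Let X be a random vector with density f_X on ℝ^d, let ε be a real random variable independent of X with distribution function F_ε, let M ⊆ ℝ^d be measurable with P(X ∈ M) > 0, and let k : ℝ^d → ℝ be measurable. Then for every x ∈ ℝ^d, P(X ≤ x, ε ≤ k(X) | X ∈ M) - P(X ≤ x | X ∈ M)·P(ε ≤ k(X) | X ∈ M) = (1/P(X ∈ M))·∫_M (1_{w ≤ x} - P(X ≤ x | X ∈ M))·f_X(w)·F_ε(k(w)) dw, where the inequality w ≤ x is componentwise. -/
import Mathlib

open MeasureTheory ProbabilityTheory

theorem stmt10 {Ω : Type*} [MeasurableSpace Ω] (μ : Measure Ω) [IsProbabilityMeasure μ]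
    {d : ℕ} (X : Ω → (Fin d → ℝ)) (ε : Ω → ℝ)
    (fX : (Fin d → ℝ) → ℝ) (Fε : ℝ → ℝ)
    (k : (Fin d → ℝ) → ℝ) (M : Set (Fin d → ℝ))
    (hX : Measurable X) (hε : Measurable ε)
    (hfX : Measurable fX) (hfX0 : ∀ w, 0 ≤ fX w)
    (hk : Measurable k) (hM : MeasurableSet M)
    (hdens : Measure.map X μ = volume.withDensity (fun w => ENNReal.ofReal (fX w)))
    (hindep : IndepFun X ε μ)
    (hcdf : ∀ e, Fε e = (μ {ω | ε ω ≤ e}).toReal)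
    (hMpos : 0 < (μ {ω | X ω ∈ M}).toReal) :
    ∀ x : Fin d → ℝ,
      (μ {ω | X ω ≤ x ∧ ε ω ≤ k (X ω) ∧ X ω ∈ M}).toReal / (μ {ω | X ω ∈ M}).toReal
        - ((μ {ω | X ω ≤ x ∧ X ω ∈ M}).toReal / (μ {ω | X ω ∈ M}).toReal)
          * ((μ {ω | ε ω ≤ k (X ω) ∧ X ω ∈ M}).toReal / (μ {ω | X ω ∈ M}).toReal)
      = (1 / (μ {ω | X ω ∈ M}).toReal) *
          ∫ w in M,
            (Set.indicator {w' : Fin d → ℝ | w' ≤ x} (fun _ => (1 : ℝ)) w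
              - (μ {ω | X ω ≤ x ∧ X ω ∈ M}).toReal / (μ {ω | X ω ∈ M}).toReal)
            * fX w * Fε (k w) := by
  intro x
  set ν := Measure.map X μ with hν
  set ρ := Measure.map ε μ with hρ
  have hF0 : ∀ e, 0 ≤ Fε e := fun e => by rw [hcdf]; exact ENNReal.toReal_nonneg
  have hFε : Measurable Fε := by
    have hmono : Monotone Fε := by
      intro a b hab
      rw [hcdf, hcdf]
      exact ENNReal.toReal_mono (measure_ne_top μ _)
        (measure_mono (fun ω h => le_trans h hab))
    exact hmono.measurable
  have hρIic : ∀ e, ρ (Set.Iic e) = ENNReal.ofReal (Fε e) := by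
    intro e
    rw [hρ, Measure.map_apply hε measurableSet_Iic]
    rw [hcdf, ENNReal.ofReal_toReal (measure_ne_top μ _)]
    rfl
  have hprod : Measure.map (fun ω => (X ω, ε ω)) μ = ν.prod ρ :=
    (indepFun_iff_map_prod_eq_prod_map_map hX.aemeasurable hε.aemeasurable).mp hindep
  -- key lintegral identity
  have key : ∀ A : Set (Fin d → ℝ), MeasurableSet A →
      μ {ω | X ω ∈ A ∧ ε ω ≤ k (X ω)}
        = ∫⁻ w in A, ENNReal.ofReal (fX w) * ENNReal.ofReal (Fε (k w)) := by
    intro A hA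
    have hS : MeasurableSet {p : (Fin d → ℝ) × ℝ | p.1 ∈ A ∧ p.2 ≤ k p.1} :=
      (hA.preimage measurable_fst).inter
        (measurableSet_le measurable_snd (hk.comp measurable_fst))
    have h1 : μ {ω | X ω ∈ A ∧ ε ω ≤ k (X ω)}
        = (ν.prod ρ) {p : (Fin d → ℝ) × ℝ | p.1 ∈ A ∧ p.2 ≤ k p.1} := by
      rw [← hprod, Measure.map_apply (hX.prodMk hε) hS]
      rfl
    rw [h1, Measure.prod_apply hS]
    have h2 : ∀ w : Fin d → ℝ,
        ρ (Prod.mk w ⁻¹' {p : (Fin d → ℝ) × ℝ | p.1 ∈ A ∧ p.2 ≤ k p.1})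
          = A.indicator (fun w => ENNReal.ofReal (Fε (k w))) w := by
      intro w
      by_cases hw : w ∈ A
      · have : Prod.mk w ⁻¹' {p : (Fin d → ℝ) × ℝ | p.1 ∈ A ∧ p.2 ≤ k p.1}
            = Set.Iic (k w) := by
          ext e; simp [hw]
        rw [this, hρIic, Set.indicator_of_mem hw]
      · have : Prod.mk w ⁻¹' {p : (Fin d → ℝ) × ℝ | p.1 ∈ A ∧ p.2 ≤ k p.1}
            = (∅ : Set ℝ) := by
          ext e; simp [hw]
        rw [this, measure_empty, Set.indicator_of_notMem hw]
    simp_rw [h2]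
    rw [lintegral_indicator hA]
    rw [hν] at hdens ⊢
    rw [hdens, setLIntegral_withDensity_eq_setLIntegral_mul _ hfX.ennreal_ofReal
      (g := fun w => ENNReal.ofReal (Fε (k w))) ((hFε.comp hk).ennreal_ofReal) hA]
    rfl
  have keyB : ∀ A : Set (Fin d → ℝ), MeasurableSet A →
      μ {ω | X ω ∈ A} = ∫⁻ w in A, ENNReal.ofReal (fX w) := by
    intro A hA
    have : μ {ω | X ω ∈ A} = ν A := by
      rw [hν, Measure.map_apply hX hA]; rfl
    rw [this, hdens, withDensity_apply _ hA]
  -- notation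
  set Q : Set (Fin d → ℝ) := {w | w ≤ x} with hQdef
  have hQ : MeasurableSet Q := measurableSet_Iic
  set g : (Fin d → ℝ) → ℝ := fun w => fX w * Fε (k w) with hgdef
  have hg : Measurable g := hfX.mul (hFε.comp hk)
  have hg0 : ∀ w, 0 ≤ g w := fun w => mul_nonneg (hfX0 w) (hF0 _)
  have keyg : ∀ A : Set (Fin d → ℝ), MeasurableSet A →
      μ {ω | X ω ∈ A ∧ ε ω ≤ k (X ω)} = ∫⁻ w in A, ENNReal.ofReal (g w) := by
    intro A hA
    rw [key A hA]
    congr 1 with w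
    rw [hgdef, ENNReal.ofReal_mul (hfX0 w)]
  have tkey : ∀ A : Set (Fin d → ℝ), MeasurableSet A →
      (μ {ω | X ω ∈ A ∧ ε ω ≤ k (X ω)}).toReal = ∫ w in A, g w := by
    intro A hA
    rw [integral_eq_lintegral_of_nonneg_ae (Filter.Eventually.of_forall hg0)
      hg.aestronglyMeasurable, keyg A hA]
  have hint : ∀ A : Set (Fin d → ℝ), MeasurableSet A →
      IntegrableOn g A volume := by
    intro A hA
    refine ⟨hg.aestronglyMeasurable, ?_⟩
    rw [hasFiniteIntegral_iff_ofReal (Filter.Eventually.of_forall hg0), ← keyg A hA]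
    exact measure_lt_top μ _
  -- set equalities
  have E1 : {ω | X ω ≤ x ∧ ε ω ≤ k (X ω) ∧ X ω ∈ M}
      = {ω | X ω ∈ Q ∩ M ∧ ε ω ≤ k (X ω)} := by
    ext ω; simp only [hQdef, Set.mem_setOf_eq, Set.mem_inter_iff] <;> tauto
  have E3 : {ω | ε ω ≤ k (X ω) ∧ X ω ∈ M}
      = {ω | X ω ∈ M ∧ ε ω ≤ k (X ω)} := by
    ext ω; simp only [Set.mem_setOf_eq]; tauto
  have E2 : {ω | X ω ≤ x ∧ X ω ∈ M} = {ω | X ω ∈ Q ∩ M} := by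
    ext ω; simp only [hQdef, Set.mem_setOf_eq, Set.mem_inter_iff] <;> tauto
  set p : ℝ := (μ {ω | X ω ∈ M}).toReal with hpdef
  have hp : p ≠ 0 := ne_of_gt hMpos
  set c : ℝ := (μ {ω | X ω ≤ x ∧ X ω ∈ M}).toReal / p with hcdef
  have hpt : ∀ w, (Set.indicator {w' : Fin d → ℝ | w' ≤ x} (fun _ => (1:ℝ)) w - c)
      * fX w * Fε (k w) = Q.indicator g w - c * g w := by
    intro w
    by_cases hw : w ∈ Q
    · rw [Set.indicator_of_mem hw, Set.indicator_of_mem hw]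
      ring
    · rw [Set.indicator_of_notMem hw, Set.indicator_of_notMem hw]
      ring
  have hI : (∫ w in M, (Set.indicator {w' : Fin d → ℝ | w' ≤ x} (fun _ => (1:ℝ)) w - c)
      * fX w * Fε (k w)) = (∫ w in Q ∩ M, g w) - c * ∫ w in M, g w := by
    simp_rw [hpt]
    rw [integral_sub ((hint M hM).indicator hQ) ((hint M hM).const_mul c),
      integral_indicator hQ, Measure.restrict_restrict hQ, integral_const_mul]
  rw [hI, E1, E3, ← tkey (Q ∩ M) (hQ.inter hM), ← tkey M hM]
  field_simp
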